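/- Gronwall inequality for Dini derivatives: let f, a, g : ℝ → ℝ be continuous functions such that D⁺f(t) ≤ a(t)·f(t) + g(t) for all t. Fix t₀ ∈ ℝ and let A(t) := ∫_{t₀}^{t} a(s) ds. Then for all t ≥ t₀, f(t) ≤ [ f(t₀) + ∫_{t₀}^{t} g(s) e^{−A(s)} ds ] e^{A(t)}. -/

import Mathlib

open Filter Set

/-- Upper right Dini derivative: `D⁺f(t) = limsup_{h→0⁺} (f(t+h) − f(t))/h`. -/
noncomputable def diniUpperRight (f : ℝ → ℝ) (t : ℝ) : EReal :=
  limsup (fun h : ℝ => (((f (t + h) - f t) / h : ℝ) : EReal)) (nhdsWithin 0 (Set.Ioi 0))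

theorem gronwall_inequality_dini
    (f a g : ℝ → ℝ) (hf : Continuous f) (ha : Continuous a) (hg : Continuous g)
    (hD : ∀ t : ℝ, diniUpperRight f t ≤ ((a t * f t + g t : ℝ) : EReal))
    (t₀ : ℝ) :
    ∀ t : ℝ, t₀ ≤ t →
      f t ≤ (f t₀ + ∫ s in t₀..t, g s * Real.exp (-(∫ r in t₀..s, a r))) *
              Real.exp (∫ s in t₀..t, a s) := by
  intro t ht
  set A : ℝ → ℝ := fun s => ∫ r in t₀..s, a r with hAdef
  have hAderiv : ∀ x, HasDerivAt A (a x) x := fun x =>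
    (ha.integral_hasStrictDerivAt t₀ x).hasDerivAt
  have hAcont : Continuous A := by
    have : Differentiable ℝ A := fun x => (hAderiv x).differentiableAt
    exact this.continuous
  -- the slope hypothesis from the Dini bound
  have hslope : ∀ x ∈ Ico t₀ t, ∀ r, a x * f x + g x < r →
      ∃ᶠ z in nhdsWithin x (Set.Ioi x), slope f x z < r := by
    intro x _ r hr
    have hlim : diniUpperRight f x < (r : EReal) := lt_of_le_of_lt (hD x) (by
      exact_mod_cast hr)
    have hev : ∀ᶠ h in nhdsWithin (0:ℝ) (Set.Ioi 0),
        (((f (x + h) - f x) / h : ℝ) : EReal) < (r : EReal) :=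
      Filter.eventually_lt_of_limsup_lt hlim
    have hmap : Filter.Tendsto (fun z : ℝ => z - x) (nhdsWithin x (Set.Ioi x))
        (nhdsWithin (0:ℝ) (Set.Ioi 0)) := by
      apply Filter.Tendsto.inf
      · exact (continuous_id.sub continuous_const).tendsto' x 0 (sub_self x)
      · apply Filter.tendsto_principal_principal.2
        intro z hz
        simpa using sub_pos.2 (Set.mem_Ioi.1 hz)
    have := hmap.eventually hev
    refine (this.mono fun z hz => ?_).frequently
    rw [slope_def_field]
    have : (f (x + (z - x)) - f x) / (z - x) < r := by exact_mod_cast hz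
    simpa using this
  have key : ∀ ε : ℝ, 0 < ε →
      f t ≤ (f t₀ + ∫ s in t₀..t, (g s + ε) * Real.exp (-(A s))) * Real.exp (A t) := by
    intro ε hε
    set h : ℝ → ℝ := fun s => (g s + ε) * Real.exp (-(A s)) with hhdef
    have hhcont : Continuous h := (hg.add continuous_const).mul (hAcont.neg.rexp)
    set B : ℝ → ℝ := fun x => (f t₀ + ∫ s in t₀..x, h s) * Real.exp (A x) with hBdef
    have hBderiv : ∀ x, HasDerivAt B (a x * B x + (g x + ε)) x := by
      intro x
      have h1 : HasDerivAt (fun x => f t₀ + ∫ s in t₀..x, h s) (h x) x :=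
        ((hhcont.integral_hasStrictDerivAt t₀ x).hasDerivAt).const_add (f t₀)
      have h2 : HasDerivAt (fun x => Real.exp (A x)) (a x * Real.exp (A x)) x := by
        simpa [mul_comm] using (hAderiv x).exp
      have := h1.mul h2
      convert this using 1
      · rfl
      · rfl
      · rfl
      simp only [hBdef, hhdef]
      rw [Real.exp_neg]
      field_simp
      ring
    have hinit : f t₀ ≤ B t₀ := by simp [hBdef, hAdef]
    have hbound : ∀ x ∈ Ico t₀ t, f x = B x →
        a x * f x + g x < a x * B x + (g x + ε) := by
      intro x _ hfx
      rw [hfx]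
      linarith
    exact image_le_of_liminf_slope_right_lt_deriv_boundary hf.continuousOn hslope hinit
      hBderiv hbound (right_mem_Icc.2 ht)
  -- pass to the limit ε → 0
  have hExpInt : IntervalIntegrable (fun s => Real.exp (-(A s))) MeasureTheory.volume t₀ t :=
    (hAcont.neg.rexp).intervalIntegrable t₀ t
  have hgInt : IntervalIntegrable (fun s => g s * Real.exp (-(A s))) MeasureTheory.volume t₀ t :=
    (hg.mul hAcont.neg.rexp).intervalIntegrable t₀ t
  set C : ℝ := (∫ s in t₀..t, Real.exp (-(A s))) * Real.exp (A t) with hCdef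
  have hC : 0 ≤ C := by
    apply mul_nonneg _ (Real.exp_pos _).le
    apply intervalIntegral.integral_nonneg ht
    intro s _
    exact (Real.exp_pos _).le
  have key2 : ∀ ε : ℝ, 0 < ε →
      f t ≤ (f t₀ + ∫ s in t₀..t, g s * Real.exp (-(A s))) * Real.exp (A t) + ε * C := by
    intro ε hε
    have := key ε hε
    have hsplit : (∫ s in t₀..t, (g s + ε) * Real.exp (-(A s)))
        = (∫ s in t₀..t, g s * Real.exp (-(A s))) + ε * ∫ s in t₀..t, Real.exp (-(A s)) := by
      rw [← intervalIntegral.integral_const_mul, ← intervalIntegral.integral_add hgInt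
        (hExpInt.const_mul ε)]
      congr 1
      ext s
      ring
    rw [hsplit] at this
    calc f t ≤ _ := this
    _ = (f t₀ + ∫ s in t₀..t, g s * Real.exp (-(A s))) * Real.exp (A t) + ε * C := by
        rw [hCdef]; ring
  have : f t ≤ (f t₀ + ∫ s in t₀..t, g s * Real.exp (-(A s))) * Real.exp (A t) := by
    by_contra hcon
    push_neg at hcon
    set T := (f t₀ + ∫ s in t₀..t, g s * Real.exp (-(A s))) * Real.exp (A t)
    have hd : 0 < f t - T := by linarith
    have := key2 ((f t - T) / (C + 1)) (by positivity)
    have hC1 : (f t - T) / (C + 1) * C < f t - T := by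
      rw [div_mul_eq_mul_div, div_lt_iff₀ (by linarith)]
      nlinarith
    linarith
  simpa [hAdef] using this
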